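/- Let k1, k2, k3 > 0 and K = diag(k1,k2,k3), and set h1 = min{k1+k2, k1+k3, k2+k3}. Let x ∈ ℝ³ with x ≠ 0, θ = ‖x‖, u = x/θ, and G = I₃ + sin(θ)·û + (1 − cos(θ))·û². Let G₃₃ denote the (3,3) entry of G and define Ψ = (1/2)·tr(K(I₃ − G)). Then 1 − G₃₃² ≤ (4/h1)·Ψ. -/
import Mathlib


open Matrix

noncomputable section

/-- Euclidean norm on ℝ³. -/
def euclNorm (x : Fin 3 → ℝ) : ℝ := Real.sqrt (∑ i, x i ^ 2)

/-- The hat map: sends `x ∈ ℝ³` to the skew-symmetric matrix `x̂`. -/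
def hat (x : Fin 3 → ℝ) : Matrix (Fin 3) (Fin 3) ℝ :=
  !![0, -x 2, x 1; x 2, 0, -x 0; -x 1, x 0, 0]

theorem stmt9 (k1 k2 k3 : ℝ)
    (hk1 : 0 < k1) (hk2 : 0 < k2) (hk3 : 0 < k3)
    (K : Matrix (Fin 3) (Fin 3) ℝ) (hK : K = Matrix.diagonal ![k1, k2, k3])
    (h1 : ℝ) (hh1 : h1 = min (k1 + k2) (min (k1 + k3) (k2 + k3)))
    (x : Fin 3 → ℝ) (hx : x ≠ 0)
    (θ : ℝ) (hθ : θ = euclNorm x)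
    (u : Fin 3 → ℝ) (hu : u = θ⁻¹ • x)
    (G : Matrix (Fin 3) (Fin 3) ℝ)
    (hG : G = 1 + Real.sin θ • hat u + (1 - Real.cos θ) • (hat u * hat u))
    (Ψ : ℝ) (hΨ : Ψ = (1 / 2) * (K * (1 - G)).trace) :
    1 - (G 2 2) ^ 2 ≤ (4 / h1) * Ψ := by
  have hS : 0 < ∑ i, x i ^ 2 := by
    have : ∃ i, x i ≠ 0 := by
      by_contra h; push_neg at h; exact hx (funext h)
    obtain ⟨i, hi⟩ := this
    have : 0 < x i ^ 2 := by positivity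
    calc 0 < x i ^ 2 := this
    _ ≤ ∑ i, x i ^ 2 := Finset.single_le_sum (f := fun j => x j ^ 2) (fun j _ => by positivity) (Finset.mem_univ i)
  have hθpos : 0 < θ := by rw [hθ, euclNorm]; positivity
  have hθsq : θ ^ 2 = ∑ i, x i ^ 2 := by
    rw [hθ, euclNorm, Real.sq_sqrt hS.le]
  have husum : u 0 ^ 2 + u 1 ^ 2 + u 2 ^ 2 = 1 := by
    simp only [hu, Pi.smul_apply, smul_eq_mul]
    have : (θ⁻¹ * x 0) ^ 2 + (θ⁻¹ * x 1) ^ 2 + (θ⁻¹ * x 2) ^ 2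
        = θ⁻¹ ^ 2 * (∑ i, x i ^ 2) := by rw [Fin.sum_univ_three]; ring
    rw [this, ← hθsq]
    field_simp
  have hG22 : G 2 2 = 1 - (1 - Real.cos θ) * (u 0 ^ 2 + u 1 ^ 2) := by
    simp [hG, hat, Matrix.mul_apply, Fin.sum_univ_three, Matrix.one_apply]
    ring
  have hΨ' : Ψ = (1/2) * (1 - Real.cos θ) *
      ((k2 + k3) * u 0 ^ 2 + (k1 + k3) * u 1 ^ 2 + (k1 + k2) * u 2 ^ 2) := by
    rw [hΨ, hK, Matrix.trace]
    simp [Matrix.diag, Matrix.mul_apply, Fin.sum_univ_three, hG, hat, Matrix.one_apply,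
      Matrix.diagonal]
    nlinarith [husum]
  have hc1 : Real.cos θ ≤ 1 := Real.cos_le_one θ
  have hc2 : -1 ≤ Real.cos θ := Real.neg_one_le_cos θ
  have hb0 : h1 ≤ k2 + k3 := by rw [hh1]; exact le_trans (min_le_right _ _) (min_le_right _ _)
  have hb1 : h1 ≤ k1 + k3 := by rw [hh1]; exact le_trans (min_le_right _ _) (min_le_left _ _)
  have hb2 : h1 ≤ k1 + k2 := by rw [hh1]; exact min_le_left _ _
  have hh1pos : 0 < h1 := by
    rw [hh1]; exact lt_min (by linarith) (lt_min (by linarith) (by linarith))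
  rw [div_mul_eq_mul_div, le_div_iff₀ hh1pos, hG22, hΨ']
  nlinarith [mul_nonneg hh1pos.le (sq_nonneg ((1 - Real.cos θ) * (u 0 ^ 2 + u 1 ^ 2))),
    mul_nonneg (mul_nonneg (by linarith : (0:ℝ) ≤ 1 - Real.cos θ) (sq_nonneg (u 0)))
      (by linarith : (0:ℝ) ≤ k2 + k3 - h1),
    mul_nonneg (mul_nonneg (by linarith : (0:ℝ) ≤ 1 - Real.cos θ) (sq_nonneg (u 1)))
      (by linarith : (0:ℝ) ≤ k1 + k3 - h1),
    mul_nonneg (mul_nonneg (by linarith : (0:ℝ) ≤ 1 - Real.cos θ) (sq_nonneg (u 2)))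
      (by linarith : (0:ℝ) ≤ k1 + k2 - h1),
    mul_nonneg hh1pos.le (mul_nonneg (by linarith : (0:ℝ) ≤ 1 - Real.cos θ) (sq_nonneg (u 2))), husum]
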